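/- For every 2 ≤ T ≤ n ≤ 2^T, every deterministic learner for prediction with n experts' advice under apple tasting feedback makes Ω(√(T log n)) mistakes on some realizable sequence of length T. -/

import Mathlib

/-- A deterministic learner for prediction with expert advice under apple tasting
feedback: it maps the history (experts' predictions and, when the learner predicted `1`,
the revealed true label) together with the current experts' predictions to a prediction. -/
def ExpertLearner (n : ℕ) : Type :=
  List ((Fin n → Bool) × Option Bool) → (Fin n → Bool) → Bool

/-- The feedback history produced by running learner `Lrn` on expert predictions `P`
and true labels `y` under apple tasting feedback. -/
def histE (n : ℕ) (Lrn : ExpertLearner n) (P : ℕ → Fin n → Bool) (y : ℕ → Bool) :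
    ℕ → List ((Fin n → Bool) × Option Bool)
  | 0 => []
  | t + 1 =>
      histE n Lrn P y t ++
        [(P t, if Lrn (histE n Lrn P y t) (P t) = true then some (y t) else none)]

/-- The learner's prediction in round `t`. -/
def predE (n : ℕ) (Lrn : ExpertLearner n) (P : ℕ → Fin n → Bool) (y : ℕ → Bool)
    (t : ℕ) : Bool :=
  Lrn (histE n Lrn P y t) (P t)

/-- The number of mistakes made by the learner during the first `T` rounds. -/
def mistakesE (n : ℕ) (Lrn : ExpertLearner n) (P : ℕ → Fin n → Bool) (y : ℕ → Bool)
    (T : ℕ) : ℕ :=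
  ((Finset.range T).filter (fun t => predE n Lrn P y t ≠ y t)).card

namespace AppleLB

open Finset
open scoped Classical

noncomputable section

/-! ### The adversary machine -/

structure St (n : ℕ) : Type where
  hist : List ((Fin n → Bool) × Option Bool)
  mode : ℕ
  blk  : ℕ
  lo   : ℕ
  hi   : ℕ
  p    : ℕ
  d    : ℕ
  u    : ℕ
  kb   : ℕ
  dd   : ℕ
  kil  : ℕ
  pi   : ℕ

variable {n : ℕ}

/-- Membership (as a natural-number index) in the currently presented set. -/
def presSet (s : St n) (x : ℕ) : Prop :=
  (s.lo + s.hi) / 2 ≤ x ∧ x < s.hi ∧ s.mode = 0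

/-- The presented expert prediction vector. -/
def pres (s : St n) : Fin n → Bool := fun j => decide (presSet s j.1)

/-- One step of the adversary machine, given the learner's response `r`. -/
def stepR (J h Dstar Kstar : ℕ) (s : St n) (r : Bool) : St n :=
  if s.mode ≠ 0 then
    { s with hist := s.hist ++ [(pres s, if r then some false else none)] }
  else
    if r then
      if Kstar ≤ s.kil + 1 then
        { s with hist := s.hist ++ [(pres s, some false)],
                 kil := s.kil + 1, mode := 2 }
      else if (s.lo + s.hi) / 2 = s.lo then
        { hist := s.hist ++ [(pres s, some false)], mode := 0, blk := s.blk + 1,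
          lo := (s.blk + 1) * 2 ^ J, hi := (s.blk + 1) * 2 ^ J + 2 ^ J,
          p := 0, d := 0, u := 0, kb := 0, dd := s.dd + s.d, kil := s.kil + 1, pi := s.pi }
      else
        { s with hist := s.hist ++ [(pres s, some false)],
                 hi := (s.lo + s.hi) / 2, p := 0,
                 u := s.u + 1, kb := s.kb + 1, kil := s.kil + 1 }
    else
      if s.p + 1 < h then
        { s with hist := s.hist ++ [(pres s, none)], p := s.p + 1, pi := s.pi + 1 }
      else
        { s with hist := s.hist ++ [(pres s, none)], p := 0, d := s.d + 1,
                 lo := (s.lo + s.hi) / 2,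
                 u := if (s.lo + s.hi) / 2 = s.lo then s.u else s.u + 1, pi := s.pi + 1,
                 mode := if Dstar ≤ s.d + 1 then 1 else 0 }

/-- A context bundling the parameters and the learner. -/
structure Ctx (n : ℕ) where
  J : ℕ
  h : ℕ
  Dstar : ℕ
  Kstar : ℕ
  Lrn : ExpertLearner n

/-- The run of the machine. -/
def Ctx.M (C : Ctx n) : ℕ → St n
  | 0 => ⟨[], 0, 0, 0, 2 ^ C.J, 0, 0, 0, 0, 0, 0, 0⟩
  | t + 1 =>
      stepR C.J C.h C.Dstar C.Kstar (C.M t)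
        (C.Lrn (C.M t).hist (pres (C.M t)))

/-- The learner's response at round `t`. -/
def Ctx.resp (C : Ctx n) (t : ℕ) : Bool :=
  C.Lrn (C.M t).hist (pres (C.M t))

/-- The expert predictions produced by the adversary. -/
def Ctx.P (C : Ctx n) (t : ℕ) : Fin n → Bool := pres (C.M t)

lemma Ctx.M_succ (C : Ctx n) (t : ℕ) :
    C.M (t + 1) = stepR C.J C.h C.Dstar C.Kstar (C.M t) (C.resp t) := rfl

/-- Number of deferred rounds before `t` in which expert `x` was presented. -/
def Ctx.Wc (C : Ctx n) (x t : ℕ) : ℕ :=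
  ((Finset.range t).filter (fun s => C.resp s = false ∧ presSet (C.M s) x)).card

/-- Number of fight rounds before `t`. -/
def Ctx.Fc (C : Ctx n) (t : ℕ) : ℕ :=
  ((Finset.range t).filter (fun s => C.resp s = true)).card

/-! ### The state invariant -/

structure Good (C : Ctx n) (s : St n) : Prop where
  hl   : s.mode = 0 → s.hist.length = s.pi + s.kil
  hp   : s.mode = 0 → s.p < C.h
  hd   : s.mode = 0 → s.d < C.Dstar
  hk   : s.mode = 0 → s.kil < C.Kstar
  hu   : s.mode = 0 → s.u ≤ C.J
  hsz  : s.mode = 0 → s.hi = s.lo + 2 ^ (C.J - s.u)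
  hblo : s.mode = 0 → s.blk * 2 ^ C.J ≤ s.lo
  hbhi : s.mode = 0 → s.hi ≤ (s.blk + 1) * 2 ^ C.J
  hukb : s.mode = 0 → s.u ≤ s.d + s.kb
  hddk : s.mode = 0 → s.dd + s.kb ≤ s.kil
  hbk  : s.mode = 0 → s.blk ≤ s.kil
  hpi  : s.mode = 0 → s.pi ≤ C.h * (s.dd + s.d) + C.h * s.kil + s.p
  hm1  : s.mode = 1 → s.lo < s.hi ∧ s.hi ≤ (s.kil + 1) * 2 ^ C.J ∧ s.kil < C.Kstar
  hm2  : s.mode = 2 → C.Kstar ≤ s.kil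

section Invariant

variable (C : Ctx n)

/-- helper: midpoint of a dyadic interval -/
lemma mid_eq_of_pos (lo e : ℕ) (he : 1 ≤ e) :
    (lo + (lo + 2 ^ e)) / 2 = lo + 2 ^ (e - 1) := by
  have h2 : 2 ^ e = 2 * 2 ^ (e - 1) := by
    conv_lhs => rw [show e = (e - 1) + 1 by omega]
    rw [pow_succ]; ring
  omega

lemma mid_eq_of_zero (lo : ℕ) :
    (lo + (lo + 2 ^ 0)) / 2 = lo := by norm_num; omega

lemma good_init (hh : 1 ≤ C.h) (hD : 1 ≤ C.Dstar) (hK : 1 ≤ C.Kstar) :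
    Good C (C.M 0) := by
  constructor <;> intro hm <;> simp_all [Ctx.M] <;> omega

lemma good_step (hh : 1 ≤ C.h) (hD : 1 ≤ C.Dstar) (hJD : C.J = 2 * C.Dstar)
    (s : St n) (r : Bool) (G : Good C s) :
    Good C (stepR C.J C.h C.Dstar C.Kstar s r) := by
  unfold stepR
  by_cases hm0 : s.mode ≠ 0
  · rw [if_pos hm0]
    refine ⟨?_, ?_, ?_, ?_, ?_, ?_, ?_, ?_, ?_, ?_, ?_, ?_, ?_, ?_⟩ <;> dsimp only <;>
      intro hm <;>
      first
        | exact absurd hm hm0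
        | exact G.hm1 hm
        | exact G.hm2 hm
  · push_neg at hm0
    rw [if_neg (by simp [hm0])]
    have hp0 := G.hp hm0
    have hd0 := G.hd hm0
    have hk0 := G.hk hm0
    have hu0 := G.hu hm0
    have hsz0 := G.hsz hm0
    have hblo0 := G.hblo hm0
    have hbhi0 := G.hbhi hm0
    have hukb0 := G.hukb hm0
    have hddk0 := G.hddk hm0
    have hbk0 := G.hbk hm0
    have hpi0 := G.hpi hm0
    have hl0 := G.hl hm0
    by_cases hr : r = true
    · rw [if_pos hr]
      by_cases hK1 : C.Kstar ≤ s.kil + 1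
      · rw [if_pos hK1]
        refine ⟨?_, ?_, ?_, ?_, ?_, ?_, ?_, ?_, ?_, ?_, ?_, ?_, ?_, ?_⟩ <;> dsimp only <;>
          intro hm <;> first | omega | exact absurd hm (by norm_num)
      · rw [if_neg hK1]
        by_cases hmid : (s.lo + s.hi) / 2 = s.lo
        · -- block death
          rw [if_pos hmid]
          -- size is 1, so u = J
          have huJ : s.u = C.J := by
            by_contra hne
            have hlt : s.u < C.J := lt_of_le_of_ne hu0 hne
            have he1 : 1 ≤ C.J - s.u := by omega
            have := mid_eq_of_pos s.lo (C.J - s.u) he1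
            rw [hsz0] at hmid
            rw [this] at hmid
            have : 1 ≤ 2 ^ (C.J - s.u - 1) := Nat.one_le_two_pow
            omega
          have hkbJ : C.J ≤ s.d + s.kb := by omega
          have hmul : C.h * (s.kil + 1) = C.h * s.kil + C.h := by ring
          have hmul2 : C.h * (s.dd + s.d + 0) = C.h * (s.dd + s.d) := by ring
          have hbig : (s.blk + 1 + 1) * 2 ^ C.J = (s.blk + 1) * 2 ^ C.J + 2 ^ C.J := by
            ring
          refine ⟨?_, ?_, ?_, ?_, ?_, ?_, ?_, ?_, ?_, ?_, ?_, ?_, ?_, ?_⟩ <;> dsimp only <;>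
            intro hm
          · simp only [List.length_append, List.length_singleton, hl0]; omega
          · omega
          · omega
          · omega
          · omega
          · simp
          · omega
          · omega
          · omega
          · omega
          · omega
          · omega
          · exact absurd hm (by norm_num)
          · exact absurd hm (by norm_num)
        · -- ordinary kill: upper half dies
          rw [if_neg hmid]
          have he1 : 1 ≤ C.J - s.u := by
            by_contra hle
            have : C.J - s.u = 0 := by omega
            rw [hsz0, this] at hmid
            exact hmid (mid_eq_of_zero s.lo)
          have hmide := mid_eq_of_pos s.lo (C.J - s.u) he1
          have h2e : 2 ^ (C.J - s.u) = 2 * 2 ^ (C.J - s.u - 1) := by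
            conv_lhs => rw [show C.J - s.u = (C.J - s.u - 1) + 1 by omega]
            rw [pow_succ]; ring
          have hexp : C.J - (s.u + 1) = C.J - s.u - 1 := by omega
          have hmul : C.h * (s.kil + 1) = C.h * s.kil + C.h := by ring
          refine ⟨?_, ?_, ?_, ?_, ?_, ?_, ?_, ?_, ?_, ?_, ?_, ?_, ?_, ?_⟩ <;> dsimp only <;>
            intro hm
          · simp [hl0]; omega
          · omega
          · omega
          · omega
          · omega
          · rw [hsz0, hmide, hexp]
          · omega
          · rw [hsz0, hmide]
            have : 1 ≤ 2 ^ (C.J - s.u - 1) := Nat.one_le_two_pow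
            omega
          · omega
          · omega
          · omega
          · omega
          · omega
          · omega
    · rw [if_neg hr]
      by_cases hp1 : s.p + 1 < C.h
      · rw [if_pos hp1]
        refine ⟨?_, ?_, ?_, ?_, ?_, ?_, ?_, ?_, ?_, ?_, ?_, ?_, ?_, ?_⟩ <;> dsimp only <;>
          intro hm
        · simp [hl0]; omega
        · omega
        · omega
        · omega
        · omega
        · exact hsz0
        · omega
        · omega
        · omega
        · omega
        · omega
        · omega
        · omega
        · omega
      · rw [if_neg hp1]
        have hph : s.p + 1 = C.h := by omega
        have hmul : C.h * (s.dd + (s.d + 1)) = C.h * (s.dd + s.d) + C.h := by ring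
        by_cases hDd : C.Dstar ≤ s.d + 1
        · -- halting with a win (mode 1)
          rw [if_pos hDd]
          have hlohi : s.lo < s.hi := by
            rw [hsz0]
            have : 1 ≤ 2 ^ (C.J - s.u) := Nat.one_le_two_pow
            omega
          refine ⟨?_, ?_, ?_, ?_, ?_, ?_, ?_, ?_, ?_, ?_, ?_, ?_, ?_, ?_⟩ <;> dsimp only <;>
            intro hm
          · exact absurd hm (by norm_num)
          · exact absurd hm (by norm_num)
          · exact absurd hm (by norm_num)
          · exact absurd hm (by norm_num)
          · exact absurd hm (by norm_num)
          · exact absurd hm (by norm_num)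
          · exact absurd hm (by norm_num)
          · exact absurd hm (by norm_num)
          · exact absurd hm (by norm_num)
          · exact absurd hm (by norm_num)
          · exact absurd hm (by norm_num)
          · exact absurd hm (by norm_num)
          · refine ⟨by omega, ?_, hk0⟩
            calc s.hi ≤ (s.blk + 1) * 2 ^ C.J := hbhi0
            _ ≤ (s.kil + 1) * 2 ^ C.J := by
                  exact Nat.mul_le_mul_right _ (by omega)
          · exact absurd hm (by norm_num)
        · -- ordinary descend
          rw [if_neg hDd]
          have hpow1 : 1 ≤ 2 ^ (C.J - s.u) := Nat.one_le_two_pow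
          refine ⟨?_, ?_, ?_, ?_, ?_, ?_, ?_, ?_, ?_, ?_, ?_, ?_, ?_, ?_⟩ <;> dsimp only <;>
            intro hm
          · simp [hl0]; omega
          · omega
          · omega
          · omega
          · -- u' ≤ J
            by_cases hml : (s.lo + s.hi) / 2 = s.lo
            · rw [if_pos hml]; omega
            · rw [if_neg hml]
              have he1 : 1 ≤ C.J - s.u := by
                by_contra hle
                have h0 : C.J - s.u = 0 := by omega
                rw [hsz0, h0] at hml
                exact hml (mid_eq_of_zero s.lo)
              omega
          · -- size equation
            by_cases hml : (s.lo + s.hi) / 2 = s.lo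
            · rw [if_pos hml, hml, ← hsz0]
            · rw [if_neg hml]
              have he1 : 1 ≤ C.J - s.u := by
                by_contra hle
                have h0 : C.J - s.u = 0 := by omega
                rw [hsz0, h0] at hml
                exact hml (mid_eq_of_zero s.lo)
              have hmide := mid_eq_of_pos s.lo (C.J - s.u) he1
              have h2e : 2 ^ (C.J - s.u) = 2 * 2 ^ (C.J - s.u - 1) := by
                conv_lhs => rw [show C.J - s.u = (C.J - s.u - 1) + 1 by omega]
                rw [pow_succ]; ring
              have hexp : C.J - (s.u + 1) = C.J - s.u - 1 := by omega
              rw [hsz0, hmide, hexp]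
              omega
          · -- blk * 2^J ≤ lo'
            omega
          · -- hi ≤ (blk+1) * 2^J
            omega
          · -- u' ≤ d' + kb
            by_cases hml : (s.lo + s.hi) / 2 = s.lo
            · rw [if_pos hml]; omega
            · rw [if_neg hml]; omega
          · omega
          · omega
          · omega
          · omega
          · omega

lemma good_run (hh : 1 ≤ C.h) (hD : 1 ≤ C.Dstar) (hK : 1 ≤ C.Kstar)
    (hJD : C.J = 2 * C.Dstar) (t : ℕ) : Good C (C.M t) := by
  induction t with
  | zero => exact good_init C hh hD hK
  | succ t ih => exact good_step C hh hD hJD _ _ ih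

lemma hist_len (t : ℕ) : (C.M t).hist.length = t := by
  induction t with
  | zero => rfl
  | succ t ih =>
      rw [Ctx.M_succ]
      unfold stepR
      split_ifs <;> simp [ih]

lemma Wc_succ (x t : ℕ) :
    C.Wc x (t + 1) =
      C.Wc x t + (if C.resp t = false ∧ presSet (C.M t) x then 1 else 0) := by
  unfold Ctx.Wc
  rw [Finset.range_add_one, Finset.filter_insert]
  split_ifs with hcond
  · rw [Finset.card_insert_of_notMem (by simp)]
  · rfl

lemma Fc_succ (t : ℕ) :
    C.Fc (t + 1) = C.Fc t + (if C.resp t = true then 1 else 0) := by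
  unfold Ctx.Fc
  rw [Finset.range_add_one, Finset.filter_insert]
  split_ifs with hcond
  · rw [Finset.card_insert_of_notMem (by simp)]
  · rfl

lemma Wc_mono (x : ℕ) {t t' : ℕ} (h : t ≤ t') : C.Wc x t ≤ C.Wc x t' := by
  unfold Ctx.Wc
  exact Finset.card_le_card
    (Finset.filter_subset_filter _ (Finset.range_subset_range.2 h))

section Invariant2

variable (hh : 1 ≤ C.h) (hD : 1 ≤ C.Dstar) (hK : 1 ≤ C.Kstar)
  (hJD : C.J = 2 * C.Dstar)

include hh hD hK hJD

/-- The main pending-count invariant. -/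
lemma winv : ∀ t : ℕ,
    ((C.M t).mode = 0 →
       (∀ x, (C.M t).lo ≤ x → x < (C.M t).hi → C.h * (C.M t).d ≤ C.Wc x t) ∧
       (∀ x, ((C.M t).lo + (C.M t).hi) / 2 ≤ x → x < (C.M t).hi →
          C.h * (C.M t).d + (C.M t).p ≤ C.Wc x t)) ∧
    ((C.M t).mode = 1 →
       ∀ x, (C.M t).lo ≤ x → x < (C.M t).hi → C.h * C.Dstar ≤ C.Wc x t) := by
  intro t
  induction t with
  | zero =>
      constructor
      · intro _
        constructor <;> intro x _ _ <;> simp [Ctx.M, Ctx.Wc]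
      · intro hm; exact absurd hm (by simp [Ctx.M])
  | succ t ih =>
      have G := good_run C hh hD hK hJD t
      have hWs : ∀ x, C.Wc x t ≤ C.Wc x (t + 1) := fun x => Wc_mono C x (by omega)
      have hWd : ∀ x, C.resp t = false → presSet (C.M t) x →
          C.Wc x (t + 1) = C.Wc x t + 1 := by
        intro x h1 h2
        rw [Wc_succ]
        rw [if_pos ⟨h1, h2⟩]
      rw [Ctx.M_succ]
      unfold stepR
      by_cases hm0 : (C.M t).mode ≠ 0
      · rw [if_pos hm0]
        dsimp only
        constructor
        · intro hm; exact absurd hm hm0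
        · intro hm
          intro x h1 h2
          exact le_trans (ih.2 hm x h1 h2) (hWs x)
      · push_neg at hm0
        rw [if_neg (by simp [hm0])]
        have hp0 := G.hp hm0
        have hd0 := G.hd hm0
        have hsz0 := G.hsz hm0
        have hpow1 : 1 ≤ 2 ^ (C.J - (C.M t).u) := Nat.one_le_two_pow
        have ihA := (ih.1 hm0).1
        have ihB := (ih.1 hm0).2
        by_cases hr : C.resp t = true
        · rw [if_pos hr]
          by_cases hK1 : C.Kstar ≤ (C.M t).kil + 1
          · rw [if_pos hK1]
            dsimp only
            exact ⟨fun hm => by omega, fun hm => by omega⟩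
          · rw [if_neg hK1]
            by_cases hmid : ((C.M t).lo + (C.M t).hi) / 2 = (C.M t).lo
            · rw [if_pos hmid]
              dsimp only
              refine ⟨fun _ => ⟨?_, ?_⟩, fun hm => by omega⟩ <;>
                intro x h1 h2 <;> simp
            · rw [if_neg hmid]
              dsimp only
              refine ⟨fun _ => ⟨?_, ?_⟩, fun hm => by omega⟩ <;>
                intro x h1 h2
              · refine le_trans (ihA x h1 ?_) (hWs x)
                omega
              · have hxlo : (C.M t).lo ≤ x := by omega
                refine le_trans ?_ (le_trans (ihA x hxlo ?_) (hWs x))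
                · omega
                · omega
        · rw [if_neg hr]
          have hrf : C.resp t = false := by
            cases hcr : C.resp t
            · rfl
            · exact absurd hcr hr
          by_cases hp1 : (C.M t).p + 1 < C.h
          · rw [if_pos hp1]
            dsimp only
            refine ⟨fun _ => ⟨?_, ?_⟩, fun hm => by omega⟩ <;>
              intro x h1 h2
            · by_cases hxm : ((C.M t).lo + (C.M t).hi) / 2 ≤ x
              · have := ihA x h1 h2
                have heq := hWd x hrf ⟨hxm, h2, hm0⟩
                omega
              · have := ihA x h1 h2
                have := hWs x
                omega
            · have := ihB x h1 h2
              have heq := hWd x hrf ⟨h1, h2, hm0⟩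
              omega
          · rw [if_neg hp1]
            have hph : (C.M t).p + 1 = C.h := by omega
            have key : ∀ x, ((C.M t).lo + (C.M t).hi) / 2 ≤ x → x < (C.M t).hi →
                C.h * ((C.M t).d + 1) ≤ C.Wc x (t + 1) := by
              intro x h1 h2
              have hB := ihB x h1 h2
              have heq := hWd x hrf ⟨h1, h2, hm0⟩
              have hm : C.h * ((C.M t).d + 1) = C.h * (C.M t).d + C.h := by ring
              omega
            by_cases hDd : C.Dstar ≤ (C.M t).d + 1
            · rw [if_pos hDd]
              dsimp only
              have hdD : (C.M t).d + 1 = C.Dstar := by omega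
              refine ⟨fun hm => by omega, fun _ => ?_⟩
              intro x h1 h2
              calc C.h * C.Dstar = C.h * ((C.M t).d + 1) := by rw [hdD]
              _ ≤ _ := key x h1 h2
            · rw [if_neg hDd]
              dsimp only
              refine ⟨fun _ => ⟨?_, ?_⟩, fun hm => by omega⟩ <;>
                intro x h1 h2
              · exact key x h1 h2
              · have h1' : ((C.M t).lo + (C.M t).hi) / 2 ≤ x := by omega
                have := key x h1' h2
                omega

/-- the block counter is monotone. -/
lemma blk_mono : ∀ t : ℕ, (C.M t).blk ≤ (C.M (t + 1)).blk := by
  intro t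
  rw [Ctx.M_succ]
  unfold stepR
  split_ifs <;> dsimp only <;> omega

lemma blk_mono' : ∀ {a b : ℕ}, a ≤ b → (C.M a).blk ≤ (C.M b).blk := by
  intro a b hab
  induction b, hab using Nat.le_induction with
  | base => exact le_rfl
  | succ b hb ih => exact le_trans ih (blk_mono C hh hD hK hJD b)

/-- any presented expert lies in the current block. -/
lemma pres_blk_bound (s' x : ℕ) (hp : presSet (C.M s') x) :
    x < ((C.M s').blk + 1) * 2 ^ C.J := by
  have G := good_run C hh hD hK hJD s'
  exact lt_of_lt_of_le hp.2.1 (G.hbhi hp.2.2)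

/-- Fights only ever hit sets disjoint from the current (or winning) interval. -/
lemma dinv : ∀ t : ℕ, ∀ s' : ℕ, s' < t → C.resp s' = true →
    ∀ x : ℕ, ((C.M t).mode = 0 ∨ (C.M t).mode = 1) →
      (C.M t).lo ≤ x → x < (C.M t).hi → ¬ presSet (C.M s') x := by
  intro t
  induction t with
  | zero => intro s' h; omega
  | succ t ih =>
      intro s' hs' hresp x hmode h1 h2
      have G := good_run C hh hD hK hJD t
      rw [Ctx.M_succ] at hmode h1 h2
      unfold stepR at hmode h1 h2
      by_cases hm0 : (C.M t).mode ≠ 0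
      · rw [if_pos hm0] at hmode h1 h2
        dsimp only at hmode h1 h2
        rcases Nat.lt_succ_iff_lt_or_eq.mp hs' with hlt | heq
        · exact ih s' hlt hresp x hmode h1 h2
        · subst heq
          intro hp
          exact hm0 hp.2.2
      · push_neg at hm0
        rw [if_neg (by simp [hm0])] at hmode h1 h2
        have hsz0 := G.hsz hm0
        have hpow1 : 1 ≤ 2 ^ (C.J - (C.M t).u) := Nat.one_le_two_pow
        have hlohi : (C.M t).lo < (C.M t).hi := by omega
        by_cases hr : C.resp t = true
        · rw [if_pos hr] at hmode h1 h2
          by_cases hK1 : C.Kstar ≤ (C.M t).kil + 1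
          · rw [if_pos hK1] at hmode h1 h2
            dsimp only at hmode h1 h2
            omega
          · rw [if_neg hK1] at hmode h1 h2
            by_cases hmid : ((C.M t).lo + (C.M t).hi) / 2 = (C.M t).lo
            · -- block death
              rw [if_pos hmid] at hmode h1 h2
              dsimp only at hmode h1 h2
              intro hp
              have hb := pres_blk_bound C hh hD hK hJD s' x hp
              have hble : (C.M s').blk ≤ (C.M t).blk :=
                blk_mono' C hh hD hK hJD (by omega)
              have : x < ((C.M t).blk + 1) * 2 ^ C.J :=
                lt_of_lt_of_le hb (Nat.mul_le_mul_right _ (by omega))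
              omega
            · rw [if_neg hmid] at hmode h1 h2
              dsimp only at hmode h1 h2
              rcases Nat.lt_succ_iff_lt_or_eq.mp hs' with hlt | heq
              · refine ih s' hlt hresp x (Or.inl hm0) h1 ?_
                omega
              · subst heq
                intro hp
                have := hp.1
                omega
        · rw [if_neg hr] at hmode h1 h2
          have hsne : s' ≠ t := by
            intro he; subst he; exact hr hresp
          have hlt : s' < t := by omega
          by_cases hp1 : (C.M t).p + 1 < C.h
          · rw [if_pos hp1] at hmode h1 h2
            dsimp only at hmode h1 h2
            exact ih s' hlt hresp x (Or.inl hm0) h1 h2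
          · rw [if_neg hp1] at hmode h1 h2
            dsimp only at hmode h1 h2
            refine ih s' hlt hresp x (Or.inl hm0) ?_ h2
            omega

/-- Kill counter is dominated by the number of fight rounds. -/
lemma kil_le_Fc : ∀ t : ℕ, (C.M t).kil ≤ C.Fc t := by
  intro t
  induction t with
  | zero => simp [Ctx.M, Ctx.Fc]
  | succ t ih =>
      rw [Ctx.M_succ, Fc_succ]
      unfold stepR
      by_cases hm0 : (C.M t).mode ≠ 0
      · rw [if_pos hm0]; dsimp only; omega
      · push_neg at hm0
        rw [if_neg (by simp [hm0])]
        by_cases hr : C.resp t = true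
        · rw [if_pos hr, if_pos hr]
          by_cases hK1 : C.Kstar ≤ (C.M t).kil + 1
          · rw [if_pos hK1]; dsimp only; omega
          · rw [if_neg hK1]
            by_cases hmid : ((C.M t).lo + (C.M t).hi) / 2 = (C.M t).lo
            · rw [if_pos hmid]; dsimp only; omega
            · rw [if_neg hmid]; dsimp only; omega
        · rw [if_neg hr, if_neg hr]
          by_cases hp1 : (C.M t).p + 1 < C.h
          · rw [if_pos hp1]; dsimp only; omega
          · rw [if_neg hp1]; dsimp only; omega

end Invariant2

lemma mode_le2 (t : ℕ) : (C.M t).mode ≤ 2 := by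
  induction t with
  | zero => simp [Ctx.M]
  | succ t ih =>
      rw [Ctx.M_succ]
      unfold stepR
      split_ifs <;> dsimp only <;> omega

lemma step_hist (J h D K : ℕ) (s : St n) (r : Bool) :
    (stepR J h D K s r).hist = s.hist ++ [(pres s, if r then some false else none)] := by
  unfold stepR
  split_ifs <;> simp_all

lemma mode_stay (t : ℕ) (hm : (C.M t).mode ≠ 0) :
    (C.M (t + 1)).mode = (C.M t).mode := by
  rw [Ctx.M_succ]; unfold stepR; rw [if_pos hm]

lemma mode_stay' {a b : ℕ} (hab : a ≤ b) (hm : (C.M a).mode ≠ 0) :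
    (C.M b).mode = (C.M a).mode := by
  induction b, hab using Nat.le_induction with
  | base => rfl
  | succ b hb ih => rw [mode_stay C b (by rw [ih]; exact hm), ih]

lemma hist_eq (jstar : Fin n)
    (hj : ∀ t, C.resp t = true → pres (C.M t) jstar = false) :
    ∀ t, histE n C.Lrn C.P (fun u => C.P u jstar) t = (C.M t).hist := by
  intro t
  induction t with
  | zero => rfl
  | succ t ih =>
      have hE : histE n C.Lrn C.P (fun u => C.P u jstar) (t + 1)
          = histE n C.Lrn C.P (fun u => C.P u jstar) t ++
            [(C.P t, if C.Lrn (histE n C.Lrn C.P (fun u => C.P u jstar) t) (C.P t) = true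
                     then some (C.P t jstar) else none)] := rfl
      rw [hE, ih, Ctx.M_succ, step_hist]
      have hP : C.P t = pres (C.M t) := rfl
      have hR : C.Lrn (C.M t).hist (C.P t) = C.resp t := rfl
      have hR' : C.Lrn (C.M t).hist (pres (C.M t)) = C.resp t := rfl
      cases hcr : C.resp t with
      | false => rw [hP, hR', hcr]; simp
      | true =>
          rw [hP, hR', hcr]
          have hjt : pres (C.M t) jstar = false := hj t hcr
          simp [hjt]

lemma predE_eq (jstar : Fin n)
    (hj : ∀ t, C.resp t = true → pres (C.M t) jstar = false) (t : ℕ) :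
    predE n C.Lrn C.P (fun u => C.P u jstar) t = C.resp t := by
  unfold predE
  rw [hist_eq C jstar hj t]
  rfl

lemma mistakes_ge_Wc (jstar : Fin n)
    (hj : ∀ t, C.resp t = true → pres (C.M t) jstar = false) (T : ℕ) :
    C.Wc jstar.1 T ≤ mistakesE n C.Lrn C.P (fun u => C.P u jstar) T := by
  unfold mistakesE Ctx.Wc
  apply Finset.card_le_card
  intro s hs
  rw [Finset.mem_filter] at hs ⊢
  refine ⟨hs.1, ?_⟩
  rw [predE_eq C jstar hj s, hs.2.1]
  have : C.P s jstar = true := by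
    simp only [Ctx.P, pres]
    exact decide_eq_true hs.2.2
  simp [this]

lemma mistakes_ge_Fc (jstar : Fin n)
    (hj : ∀ t, C.resp t = true → pres (C.M t) jstar = false) (T : ℕ) :
    C.Fc T ≤ mistakesE n C.Lrn C.P (fun u => C.P u jstar) T := by
  unfold mistakesE Ctx.Fc
  apply Finset.card_le_card
  intro s hs
  rw [Finset.mem_filter] at hs ⊢
  refine ⟨hs.1, ?_⟩
  rw [predE_eq C jstar hj s, hs.2]
  have : C.P s jstar = false := hj s hs.2
  simp [this]

lemma no_mode0 (hh : 1 ≤ C.h) (hD : 1 ≤ C.Dstar) (hK : 1 ≤ C.Kstar)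
    (hJD : C.J = 2 * C.Dstar) (T : ℕ)
    (htally : 2 * (C.h * C.Kstar) + C.h * C.Dstar + C.h + C.Kstar < T) :
    (C.M T).mode ≠ 0 := by
  intro hm
  have G := good_run C hh hD hK hJD T
  have hlen := hist_len C T
  have h1 := G.hl hm
  have h2 := G.hpi hm
  have h3 := G.hddk hm
  have h4 := G.hd hm
  have h5 := G.hp hm
  have h6 := G.hk hm
  have e1 : C.h * ((C.M T).dd + (C.M T).d) ≤ C.h * (C.M T).kil + C.h * C.Dstar := by
    calc C.h * ((C.M T).dd + (C.M T).d) ≤ C.h * ((C.M T).kil + C.Dstar) :=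
          Nat.mul_le_mul_left _ (by omega)
    _ = C.h * (C.M T).kil + C.h * C.Dstar := by ring
  have e2 : C.h * (C.M T).kil ≤ C.h * C.Kstar := Nat.mul_le_mul_left _ (by omega)
  omega


end Invariant

/-! ### Arithmetic helpers -/

lemma nat_le_of_sq_le {a b : ℕ} (hab : a * a ≤ b * b) : a ≤ b := by
  by_contra hc
  push_neg at hc
  exact absurd hab (not_le.mpr (Nat.mul_self_lt_mul_self hc))

lemma nat_lt_of_sq_lt {a b : ℕ} (hab : a * a < b * b) : a < b := by
  by_contra hc
  push_neg at hc
  exact absurd hab (not_lt.mpr (Nat.mul_self_le_mul_self hc))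

lemma aux_pow (z : ℕ) (hz : 6 ≤ z) : 4 * z + 36 ≤ 3 * 2 ^ z := by
  induction z, hz using Nat.le_induction with
  | base => norm_num
  | succ z hz ih =>
      have h1 : 2 ^ (z + 1) = 2 * 2 ^ z := by rw [pow_succ]; ring
      have h2 : 4 ≤ 2 ^ z := by
        calc (4 : ℕ) = 2 ^ 2 := by norm_num
        _ ≤ 2 ^ z := Nat.pow_le_pow_right (by norm_num) (by omega)
      omega

/-! ### The easy case: force one mistake -/

lemma caseA (n T : ℕ) (hT : 1 ≤ T) (hn : 2 ≤ n) (Lrn : ExpertLearner n) :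
    ∃ (P : ℕ → Fin n → Bool) (y : ℕ → Bool),
      (∃ j : Fin n, ∀ t < T, P t j = y t) ∧ 1 ≤ mistakesE n Lrn P y T := by
  set P : ℕ → Fin n → Bool := fun _ j => decide ((j : ℕ) = 1) with hP
  have hhist : histE n Lrn P (fun _ => false) 0 = [] := rfl
  have hhist2 : histE n Lrn P (fun _ => true) 0 = [] := rfl
  by_cases hr : Lrn [] (P 0) = true
  · refine ⟨P, fun _ => false, ⟨⟨0, by omega⟩, fun t _ => by simp [hP]⟩, ?_⟩
    have h0 : predE n Lrn P (fun _ => false) 0 = true := by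
      unfold predE
      rw [hhist]
      exact hr
    unfold mistakesE
    rw [Finset.one_le_card]
    exact ⟨0, Finset.mem_filter.mpr ⟨Finset.mem_range.mpr (by omega), by rw [h0]; simp⟩⟩
  · refine ⟨P, fun _ => true, ⟨⟨1, by omega⟩, fun t _ => by simp [hP]⟩, ?_⟩
    have h0 : predE n Lrn P (fun _ => true) 0 = false := by
      unfold predE
      rw [hhist2]
      simpa using hr
    unfold mistakesE
    rw [Finset.one_le_card]
    exact ⟨0, Finset.mem_filter.mpr ⟨Finset.mem_range.mpr (by omega), by rw [h0]; simp⟩⟩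

/-! ### The main case -/

lemma caseB (n T : ℕ) (hT : 2 ^ 41 ≤ T) (hTn : T ≤ n) (hnT : n ≤ 2 ^ T)
    (Lrn : ExpertLearner n) :
    ∃ (P : ℕ → Fin n → Bool) (y : ℕ → Bool),
      (∃ j : Fin n, ∀ t < T, P t j = y t) ∧
      T * Nat.log 2 n ≤ 4096 * (mistakesE n Lrn P y T * mistakesE n Lrn P y T) := by
  classical
  have hT2 : 2 ≤ T := le_trans (by norm_num) hT
  have hn0 : n ≠ 0 := by omega
  set k := Nat.log 2 n with hkdef
  set l := Nat.log 2 (T * k) with hldef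
  set A := (k - l / 2 - 3) / 2 with hAdef
  set Dstar := max 1 (min A (T / 16)) with hDdef
  set J := 2 * Dstar with hJdef
  set q := T / (8 * J) with hqdef
  set s0 := Nat.sqrt q with hs0def
  set h := s0 + 1 with hhdef
  set Kstar := T / (8 * h) with hKdef
  have hkT : k ≤ T := by
    rw [hkdef]
    calc Nat.log 2 n ≤ Nat.log 2 (2 ^ T) := Nat.log_mono_right hnT
    _ = T := Nat.log_pow (by norm_num) T
  have hk41 : 41 ≤ k := by
    rw [hkdef]
    have h1 : (2:ℕ) ^ 41 ≤ n := le_trans hT hTn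
    exact (Nat.le_log_iff_pow_le (by norm_num) hn0).mpr h1
  have hkn : 2 ^ k ≤ n := Nat.pow_log_le_self 2 hn0
  have hk0 : k ≠ 0 := by omega
  have hlk : l ≤ k + Nat.log 2 k + 1 := by
    have hL : Nat.log 2 T ≤ k := by rw [hkdef]; exact Nat.log_mono_right hTn
    have h1 : T < 2 ^ (Nat.log 2 T + 1) := Nat.lt_pow_succ_log_self (by norm_num) T
    have h2 : k < 2 ^ (Nat.log 2 k + 1) := Nat.lt_pow_succ_log_self (by norm_num) k
    have h3 : T * k < 2 ^ (Nat.log 2 T + 1 + (Nat.log 2 k + 1)) := by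
      rw [pow_add]
      exact Nat.mul_lt_mul'' h1 h2
    have h4 : l < Nat.log 2 T + 1 + (Nat.log 2 k + 1) := by
      rw [hldef]
      exact Nat.log_lt_of_lt_pow (by positivity) h3
    omega
  have h7k : 4 * l + 32 ≤ 7 * k := by
    rcases le_or_gt (Nat.log 2 k) 5 with hz5 | hz5
    · omega
    · have h2 : 2 ^ (Nat.log 2 k) ≤ k := Nat.pow_log_le_self 2 hk0
      have := aux_pow (Nat.log 2 k) (by omega)
      omega
  have hD1 : 1 ≤ Dstar := le_max_left _ _
  have hDmin : min A (T / 16) ≤ Dstar := le_max_right _ _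
  have hJ1 : 1 ≤ J := by omega
  have hcase : Dstar = 1 ∨ Dstar ≤ A := by
    rcases Nat.eq_zero_or_pos (min A (T / 16)) with h0 | hpos
    · left; rw [hDdef, h0]; rfl
    · right
      rw [hDdef, max_eq_right hpos]
      exact min_le_left _ _
  have hJlk : J + l / 2 + 3 ≤ k := by
    rcases hcase with hc | hc <;> omega
  have hkJ : k ≤ 16 * J := by
    rcases le_total A (T / 16) with hc | hc
    · have h1 : min A (T / 16) = A := min_eq_left hc
      omega
    · have h1 : min A (T / 16) = T / 16 := min_eq_right hc
      omega
  have hJT : 8 * J ≤ T := by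
    have h2 : Dstar ≤ max 1 (T / 16) :=
      max_le_max (le_refl 1) (min_le_right _ _)
    have h3 : (1:ℕ) ≤ T / 16 := by omega
    rw [max_eq_right h3] at h2
    omega
  have hq1 : 1 ≤ q := by
    rw [hqdef]
    exact (Nat.one_le_div_iff (by positivity)).mpr hJT
  have hs1 : 1 ≤ s0 := by
    rw [hs0def]
    exact Nat.sqrt_pos.mpr hq1
  have hh1 : 1 ≤ h := by omega
  have hsq : s0 * s0 ≤ q := by rw [hs0def]; exact Nat.sqrt_le q
  have hqlt : q < h * h := by
    rw [hhdef, hs0def]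
    exact Nat.lt_succ_sqrt q
  have hTlt : T < 8 * J * (h * h) := by
    have hdm := Nat.div_add_mod T (8 * J)
    have hmod : T % (8 * J) < 8 * J := Nat.mod_lt _ (by positivity)
    have e0 : 8 * J * (T / (8 * J)) = 8 * J * q := by rw [hqdef]
    have e1 : 8 * J * (q + 1) = 8 * J * q + 8 * J := by ring
    have e2 : 8 * J * (q + 1) ≤ 8 * J * (h * h) :=
      Nat.mul_le_mul_left _ (by omega)
    omega
  have hhq : h * h ≤ 4 * q := by
    have e1 : h * h ≤ (2 * s0) * (2 * s0) :=
      Nat.mul_le_mul (by omega) (by omega)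
    have e2 : (2 * s0) * (2 * s0) = 4 * (s0 * s0) := by ring
    omega
  have h4q : 4 * q ≤ T / (2 * J) := by
    have e1 : q = T / (2 * J) / 4 := by
      rw [hqdef, Nat.div_div_eq_div_mul]
      congr 1
      ring
    have e2 : (T / (2 * J) / 4) * 4 ≤ T / (2 * J) := Nat.div_mul_le_self _ 4
    omega
  have hhT2J : h * h ≤ T / (2 * J) := le_trans hhq h4q
  have hdiv2J : T / (2 * J) ≤ T / 2 :=
    Nat.div_le_div_left (by omega) (by norm_num)
  have h8h : 8 * h ≤ T := by
    apply nat_le_of_sq_le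
    have e1 : (8 * h) * (8 * h) = 64 * (h * h) := by ring
    have e3 : 64 * (h * h) ≤ 64 * (T / 2) := by
      have := le_trans hhT2J hdiv2J
      omega
    have e5 : 32 * T ≤ T * T := Nat.mul_le_mul_right T (by omega)
    omega
  have h16h : 16 * h ≤ T := by
    apply nat_le_of_sq_le
    have e1 : (16 * h) * (16 * h) = 256 * (h * h) := by ring
    have e3 : 256 * (h * h) ≤ 128 * T := by
      have := le_trans hhT2J hdiv2J
      omega
    have e5 : 128 * T ≤ T * T := Nat.mul_le_mul_right T (by omega)
    omega
  have hK1 : 1 ≤ Kstar := by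
    rw [hKdef]; exact (Nat.one_le_div_iff (by positivity)).mpr h8h
  have hK2 : 2 ≤ Kstar := by
    rw [hKdef]
    rw [Nat.le_div_iff_mul_le (by positivity)]
    omega
  have hKh : 8 * h * Kstar ≤ T := by
    rw [hKdef]
    calc 8 * h * (T / (8 * h)) = (T / (8 * h)) * (8 * h) := by ring
    _ ≤ T := Nat.div_mul_le_self _ _
  have hTK : T < 8 * h * (Kstar + 1) := by
    have hdm := Nat.div_add_mod T (8 * h)
    have hmod : T % (8 * h) < 8 * h := Nat.mod_lt _ (by positivity)
    have e1 : 8 * h * (Kstar + 1) = 8 * h * Kstar + 8 * h := by ring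
    have e2 : 8 * h * Kstar = 8 * h * (T / (8 * h)) := by rw [hKdef]
    omega
  -- tally
  have hhK8 : h * Kstar ≤ T / 8 := by
    have e1 : Kstar = T / 8 / h := by
      rw [hKdef, Nat.div_div_eq_div_mul]
    calc h * Kstar = (T / 8 / h) * h := by rw [e1]; ring
    _ ≤ T / 8 := Nat.div_mul_le_self _ _
  have hJ8 : J ≤ T / 8 := by
    rw [Nat.le_div_iff_mul_le (by norm_num)]
    omega
  have hs0J : s0 * J ≤ T / 8 := by
    apply nat_le_of_sq_le
    have e0 : q * J ≤ T / 8 := by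
      have e1 : q = T / 8 / J := by
        rw [hqdef, Nat.div_div_eq_div_mul]
      calc q * J = (T / 8 / J) * J := by rw [e1]
      _ ≤ T / 8 := Nat.div_mul_le_self _ _
    calc (s0 * J) * (s0 * J) = ((s0 * s0) * J) * J := by ring
    _ ≤ (q * J) * J := Nat.mul_le_mul_right J (Nat.mul_le_mul_right J hsq)
    _ ≤ (T / 8) * J := Nat.mul_le_mul_right J e0
    _ ≤ (T / 8) * (T / 8) := Nat.mul_le_mul_left _ hJ8
  have hhJ : h * J ≤ T / 4 := by
    have e1 : h * J = s0 * J + J := by rw [hhdef]; ring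
    omega
  have hhDD : h * J = 2 * (h * Dstar) := by rw [hJdef]; ring
  have htally : 2 * (h * Kstar) + h * Dstar + h + Kstar < T := by
    have e1 : h ≤ h * Kstar := Nat.le_mul_of_pos_right h (by omega)
    have e2 : Kstar ≤ T / 8 := by
      rw [hKdef]
      exact Nat.div_le_div_left (by omega) (by norm_num)
    omega
  -- lower bounds
  have hlow1 : T * k ≤ 512 * ((h * Dstar) * (h * Dstar)) := by
    have e1 : T * k ≤ (8 * J * (h * h)) * (16 * J) :=
      Nat.mul_le_mul (le_of_lt hTlt) hkJ
    have e2 : (8 * J * (h * h)) * (16 * J) = 128 * ((h * J) * (h * J)) := by ring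
    have e4 : 128 * ((2 * (h * Dstar)) * (2 * (h * Dstar)))
        = 512 * ((h * Dstar) * (h * Dstar)) := by ring
    rw [e2, hhDD, e4] at e1
    exact e1
  have hTJ64 : T * (2 * J) < 64 * ((Kstar + 1) * (Kstar + 1)) := by
    have c1 : T * T < (8 * h * (Kstar + 1)) * (8 * h * (Kstar + 1)) :=
      Nat.mul_self_lt_mul_self hTK
    have c2 : (8 * h * (Kstar + 1)) * (8 * h * (Kstar + 1))
        = (h * h) * (64 * ((Kstar + 1) * (Kstar + 1))) := by ring
    have c3 : (h * h) * (64 * ((Kstar + 1) * (Kstar + 1)))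
        ≤ (T / (2 * J)) * (64 * ((Kstar + 1) * (Kstar + 1))) :=
      Nat.mul_le_mul_right _ hhT2J
    have c4 : T * T < (T / (2 * J)) * (64 * ((Kstar + 1) * (Kstar + 1))) := by omega
    have c5 : (T / (2 * J)) * (2 * J) ≤ T := Nat.div_mul_le_self _ _
    have c6 : (T * T) * (2 * J)
        < ((T / (2 * J)) * (64 * ((Kstar + 1) * (Kstar + 1)))) * (2 * J) :=
      (Nat.mul_lt_mul_right (by positivity)).mpr c4
    have c7 : ((T / (2 * J)) * (64 * ((Kstar + 1) * (Kstar + 1)))) * (2 * J)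
        = ((T / (2 * J)) * (2 * J)) * (64 * ((Kstar + 1) * (Kstar + 1))) := by ring
    have c8 : ((T / (2 * J)) * (2 * J)) * (64 * ((Kstar + 1) * (Kstar + 1)))
        ≤ T * (64 * ((Kstar + 1) * (Kstar + 1))) := Nat.mul_le_mul_right _ c5
    have c9 : T * (T * (2 * J)) < T * (64 * ((Kstar + 1) * (Kstar + 1))) := by
      have c10 : (T * T) * (2 * J) = T * (T * (2 * J)) := by ring
      omega
    exact Nat.lt_of_mul_lt_mul_left c9
  have hlow2 : T * k ≤ 2048 * (Kstar * Kstar) := by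
    have d1 : T * k ≤ T * (16 * J) := Nat.mul_le_mul_left T hkJ
    have d2 : T * (16 * J) = 8 * (T * (2 * J)) := by ring
    have d4 : Kstar + 1 ≤ 2 * Kstar := by omega
    have d5 : (Kstar + 1) * (Kstar + 1) ≤ (2 * Kstar) * (2 * Kstar) :=
      Nat.mul_le_mul d4 d4
    have d6 : (2 * Kstar) * (2 * Kstar) = 4 * (Kstar * Kstar) := by ring
    omega
  -- supply
  have hsupply : (Kstar + 1) * 2 ^ J < n := by
    have u1 : (8 * h * Kstar) * (8 * h * Kstar) ≤ T * T :=
      Nat.mul_self_le_mul_self hKh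
    have u2 : (8 * h * Kstar) * (8 * h * Kstar)
        = (h * h) * (64 * (Kstar * Kstar)) := by ring
    have u3 : T * T < (8 * J * (h * h)) * T :=
      (Nat.mul_lt_mul_right (by omega)).mpr hTlt
    have u4 : (8 * J * (h * h)) * T = (h * h) * (8 * (J * T)) := by ring
    have u5 : (h * h) * (64 * (Kstar * Kstar)) < (h * h) * (8 * (J * T)) := by omega
    have u6 : 64 * (Kstar * Kstar) < 8 * (J * T) := Nat.lt_of_mul_lt_mul_left u5
    have hJk2 : J ≤ k := by omega
    have u7 : J * T ≤ k * T := Nat.mul_le_mul_right T hJk2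
    have u8 : k * T < 2 ^ (l + 1) := by
      have h9 := Nat.lt_pow_succ_log_self (b := 2) (by norm_num) (T * k)
      rw [hldef]
      calc k * T = T * k := by ring
      _ < 2 ^ (Nat.log 2 (T * k) + 1) := h9
    have u9 : 8 * ((Kstar + 1) * (Kstar + 1)) ≤ 64 * (Kstar * Kstar) := by
      have d4 : Kstar + 1 ≤ 2 * Kstar := by omega
      have d5 : (Kstar + 1) * (Kstar + 1) ≤ (2 * Kstar) * (2 * Kstar) :=
        Nat.mul_le_mul d4 d4
      have d6 : (2 * Kstar) * (2 * Kstar) = 4 * (Kstar * Kstar) := by ring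
      omega
    have u10 : (2:ℕ) ^ (l + 4) = 2 ^ (l + 1) * 8 := by
      rw [show l + 4 = (l + 1) + 3 by omega, pow_add]
      norm_num
    have u11 : (Kstar + 1) * (Kstar + 1) < 2 ^ (l + 1) := by omega
    have u11b : (Kstar + 1) * (Kstar + 1) < 2 ^ (l / 2 + 1) * 2 ^ (l / 2 + 1) := by
      have e : (2:ℕ) ^ (l / 2 + 1) * 2 ^ (l / 2 + 1) = 2 ^ (2 * (l / 2) + 2) := by
        rw [← pow_add]
        congr 1
        ring
      have e2 : (2:ℕ) ^ (l + 1) ≤ 2 ^ (2 * (l / 2) + 2) :=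
        Nat.pow_le_pow_right (by norm_num) (by omega)
      omega
    have u12 : Kstar + 1 < 2 ^ (l / 2 + 1) := nat_lt_of_sq_lt u11b
    have u13 : (Kstar + 1) * 2 ^ J < 2 ^ (l / 2 + 1) * 2 ^ J :=
      (Nat.mul_lt_mul_right (by positivity)).mpr u12
    have u14 : (2:ℕ) ^ (l / 2 + 1) * 2 ^ J = 2 ^ (J + l / 2 + 1) := by
      rw [← pow_add]
      congr 1
      omega
    have u16 : (2:ℕ) ^ (J + l / 2 + 1) ≤ 2 ^ k :=
      Nat.pow_le_pow_right (by norm_num) (by omega)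
    omega
  -- the machine
  set C : Ctx n := ⟨J, h, Dstar, Kstar, Lrn⟩ with hCdef
  have hCK : C.Kstar = Kstar := rfl
  have hCJ : C.J = J := rfl
  have hCh : C.h = h := rfl
  have hCD : C.Dstar = Dstar := rfl
  have hh' : 1 ≤ C.h := hh1
  have hD' : 1 ≤ C.Dstar := hD1
  have hK' : 1 ≤ C.Kstar := hK1
  have hJD : C.J = 2 * C.Dstar := hJdef
  have hmode : (C.M T).mode ≠ 0 := no_mode0 C hh' hD' hK' hJD T htally
  have G := good_run C hh' hD' hK' hJD T
  have hm12 : (C.M T).mode = 1 ∨ (C.M T).mode = 2 := by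
    have := mode_le2 C T
    omega
  rcases hm12 with h1 | h2
  · -- mode 1 : pending-weight win
    obtain ⟨hlh, hhiK, hkK⟩ := G.hm1 h1
    have hjlt : (C.M T).lo < n := by
      have e1 : ((C.M T).kil + 1) * 2 ^ C.J ≤ (Kstar + 1) * 2 ^ J :=
        Nat.mul_le_mul_right _ (by omega)
      omega
    set jstar : Fin n := ⟨(C.M T).lo, hjlt⟩ with hjs
    have hj : ∀ t, C.resp t = true → pres (C.M t) jstar = false := by
      intro t hrt
      apply decide_eq_false
      rcases lt_or_ge t T with hlt | hge
      · exact dinv C hh' hD' hK' hJD T t hlt hrt jstar.1 (Or.inr h1) le_rfl hlh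
      · intro hp
        have hmt : (C.M t).mode = (C.M T).mode := mode_stay' C hge (by omega)
        rw [hp.2.2] at hmt
        omega
    have hWb : C.h * C.Dstar ≤ C.Wc jstar.1 T :=
      (winv C hh' hD' hK' hJD T).2 h1 jstar.1 le_rfl hlh
    have hMb : h * Dstar ≤ mistakesE n C.Lrn C.P (fun u => C.P u jstar) T :=
      le_trans hWb (mistakes_ge_Wc C jstar hj T)
    refine ⟨C.P, fun u => C.P u jstar, ⟨jstar, fun t _ => rfl⟩, ?_⟩
    have hsqle : (h * Dstar) * (h * Dstar)
        ≤ mistakesE n C.Lrn C.P (fun u => C.P u jstar) T *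
          mistakesE n C.Lrn C.P (fun u => C.P u jstar) T :=
      Nat.mul_le_mul hMb hMb
    calc T * k ≤ 512 * ((h * Dstar) * (h * Dstar)) := hlow1
    _ ≤ 4096 * (mistakesE n C.Lrn C.P (fun u => C.P u jstar) T *
          mistakesE n C.Lrn C.P (fun u => C.P u jstar) T) := by omega
  · -- mode 2 : many fights
    set jstar : Fin n := ⟨(Kstar + 1) * 2 ^ J, hsupply⟩ with hjs
    have hj : ∀ t, C.resp t = true → pres (C.M t) jstar = false := by
      intro t _
      apply decide_eq_false
      intro hp
      have hm0 : (C.M t).mode = 0 := hp.2.2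
      have Gt := good_run C hh' hD' hK' hJD t
      have e1 : jstar.1 < ((C.M t).blk + 1) * 2 ^ C.J :=
        lt_of_lt_of_le hp.2.1 (Gt.hbhi hm0)
      have e2 : (C.M t).blk + 1 ≤ Kstar + 1 := by
        have h3 := Gt.hbk hm0
        have h4 := Gt.hk hm0
        omega
      have e3 : ((C.M t).blk + 1) * 2 ^ C.J ≤ (Kstar + 1) * 2 ^ J :=
        Nat.mul_le_mul_right _ e2
      have e4 : jstar.1 < (Kstar + 1) * 2 ^ J := lt_of_lt_of_le e1 e3
      exact absurd e4 (lt_irrefl _)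
    have hkil : Kstar ≤ (C.M T).kil := G.hm2 h2
    have hFb := kil_le_Fc C hh' hD' hK' hJD T
    have hMb : Kstar ≤ mistakesE n C.Lrn C.P (fun u => C.P u jstar) T :=
      le_trans (le_trans hkil hFb) (mistakes_ge_Fc C jstar hj T)
    refine ⟨C.P, fun u => C.P u jstar, ⟨jstar, fun t _ => rfl⟩, ?_⟩
    have hsqle : Kstar * Kstar
        ≤ mistakesE n C.Lrn C.P (fun u => C.P u jstar) T *
          mistakesE n C.Lrn C.P (fun u => C.P u jstar) T :=
      Nat.mul_le_mul hMb hMb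
    calc T * k ≤ 2048 * (Kstar * Kstar) := hlow2
    _ ≤ 4096 * (mistakesE n C.Lrn C.P (fun u => C.P u jstar) T *
          mistakesE n C.Lrn C.P (fun u => C.P u jstar) T) := by omega

end

end AppleLB

theorem experts_realizable_lower_bound :
    ∃ c : ℝ, 0 < c ∧
      ∀ n T : ℕ, 2 ≤ T → T ≤ n → n ≤ 2 ^ T →
        ∀ Lrn : ExpertLearner n, ∃ (P : ℕ → Fin n → Bool) (y : ℕ → Bool),
          (∃ j : Fin n, ∀ t < T, P t j = y t) ∧
          c * Real.sqrt (T * Real.log n) ≤ (mistakesE n Lrn P y T : ℝ) := by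
  refine ⟨(((2:ℝ)) ^ (50:ℕ))⁻¹, by positivity, ?_⟩
  intro n T hT2 hTn hnT Lrn
  have hn2 : 2 ≤ n := le_trans hT2 hTn
  have hlog2lt : Real.log 2 ≤ 1 := by
    have h1 : Real.log 2 < 0.6931471808 := Real.log_two_lt_d9
    linarith
  by_cases hbig : T < 2 ^ 41
  · obtain ⟨P, y, hreal, hM⟩ := AppleLB.caseA n T (by omega) hn2 Lrn
    refine ⟨P, y, hreal, ?_⟩
    have h1 : (1:ℝ) ≤ (mistakesE n Lrn P y T : ℝ) := by exact_mod_cast hM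
    have hlog : Real.log n ≤ T := by
      have h2 : (n:ℝ) ≤ (2:ℝ) ^ T := by exact_mod_cast hnT
      calc Real.log n ≤ Real.log ((2:ℝ) ^ T) :=
            Real.log_le_log (by positivity) h2
      _ = T * Real.log 2 := by rw [Real.log_pow]
      _ ≤ T * 1 := by
            apply mul_le_mul_of_nonneg_left hlog2lt (by positivity)
      _ = T := by ring
    have h2 : Real.sqrt (T * Real.log n) ≤ T := by
      have h3 : (T:ℝ) * Real.log n ≤ (T:ℝ) * T := by
        apply mul_le_mul_of_nonneg_left hlog (by positivity)
      calc Real.sqrt (T * Real.log n) ≤ Real.sqrt ((T:ℝ) * T) := Real.sqrt_le_sqrt h3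
      _ = T := by
            rw [show (T:ℝ) * T = (T:ℝ) ^ 2 by ring]
            exact Real.sqrt_sq (by positivity)
    have hTlt : (T:ℝ) < 2 ^ 41 := by exact_mod_cast hbig
    calc ((2:ℝ) ^ (50:ℕ))⁻¹ * Real.sqrt (T * Real.log n)
        ≤ ((2:ℝ) ^ (50:ℕ))⁻¹ * T := by
          apply mul_le_mul_of_nonneg_left h2 (by positivity)
    _ ≤ 1 := by
          rw [inv_mul_le_iff₀ (by positivity)]
          nlinarith
    _ ≤ _ := h1
  · push_neg at hbig
    obtain ⟨P, y, hreal, hM⟩ := AppleLB.caseB n T hbig hTn hnT Lrn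
    refine ⟨P, y, hreal, ?_⟩
    set M := mistakesE n Lrn P y T with hMdef
    set k := Nat.log 2 n with hkdef
    have hk1 : 1 ≤ k := by
      rw [hkdef]
      exact (Nat.le_log_iff_pow_le (by norm_num) (by omega)).mpr (by omega)
    have hM0 : (0:ℝ) ≤ (M:ℝ) := by positivity
    have hlogn : Real.log n ≤ 2 * (k:ℝ) := by
      have h1 : (n:ℝ) ≤ (2:ℝ) ^ (k + 1) := by
        have h2 : n < 2 ^ (k + 1) := by
          have := Nat.lt_pow_succ_log_self (b := 2) (by norm_num) n
          rw [hkdef]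
          exact this
        exact_mod_cast le_of_lt h2
      calc Real.log n ≤ Real.log ((2:ℝ) ^ (k + 1)) :=
            Real.log_le_log (by positivity) h1
      _ = (k + 1 : ℕ) * Real.log 2 := by rw [Real.log_pow]
      _ ≤ (k + 1 : ℕ) * 1 := by
            apply mul_le_mul_of_nonneg_left hlog2lt (by positivity)
      _ ≤ 2 * (k:ℝ) := by
            push_cast
            have : (1:ℝ) ≤ (k:ℝ) := by exact_mod_cast hk1
            linarith
    have hTk : (T:ℝ) * k ≤ 4096 * ((M:ℝ) * M) := by exact_mod_cast hM
    have hTM : (T:ℝ) * Real.log n ≤ 8192 * (M:ℝ) ^ 2 := by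
      calc (T:ℝ) * Real.log n ≤ (T:ℝ) * (2 * k) := by
            apply mul_le_mul_of_nonneg_left hlogn (by positivity)
      _ = 2 * ((T:ℝ) * k) := by ring
      _ ≤ 2 * (4096 * ((M:ℝ) * M)) := by linarith
      _ = 8192 * (M:ℝ) ^ 2 := by ring
    have hsq : Real.sqrt (T * Real.log n) ≤ 91 * M := by
      calc Real.sqrt (T * Real.log n) ≤ Real.sqrt ((91 * (M:ℝ)) ^ 2) := by
            apply Real.sqrt_le_sqrt
            nlinarith [sq_nonneg (M:ℝ)]
      _ = 91 * M := Real.sqrt_sq (by positivity)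
    calc ((2:ℝ) ^ (50:ℕ))⁻¹ * Real.sqrt (T * Real.log n)
        ≤ ((2:ℝ) ^ (50:ℕ))⁻¹ * (91 * M) := by
          apply mul_le_mul_of_nonneg_left hsq (by positivity)
    _ ≤ M := by
          rw [inv_mul_le_iff₀ (by positivity)]
          nlinarith
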